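/- Let (M^{2n}, g, J) be strict nearly Kähler with TM = L ⊕ E a ∇̄-parallel, g-orthogonal, J-stable splitting with rank L = 2. Then for X, Y ∈ E and V ∈ L: R̄(X,Y,V,JV) = −2⟨(∇_V J)²X, JY⟩, and R̄(X,V,V,JV) = 0. -/
import Mathlib


open RealInnerProductSpace

/-
Pointwise model of a strict nearly Kähler manifold `(M^{2n}, g, J)` whose
tangent bundle splits as `TM = L ⊕ E`, a `∇̄`-parallel, `g`-orthogonal,
`J`-stable splitting with `rank L = 2`.  Here `A x y = (∇_x J) y`, `R` is the
Riemann curvature, `R̄` the curvature of the canonical Hermitian connection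
(related by formula (2.4)); the torsion `T(X,Y) = (∇_X J)(JY)` vanishes on
`L` and maps `L × E` to `E`, and since `L` and `E` are `∇̄`-parallel and
orthogonal, `R̄` pairs a vector of `E` with a vector of `L` to zero.

STATEMENT (Lemma 4.1): for `X, Y ∈ E` and `V ∈ L`,
`R̄(X,Y,V,JV) = −2⟨(∇_V J)² X, JY⟩` and `R̄(X,V,V,JV) = 0`.
-/
theorem reducibleNK_curvature_identities
    (V : Type) [NormedAddCommGroup V] [InnerProductSpace ℝ V]
    [FiniteDimensional ℝ V]
    (n : ℕ) (hdim : Module.finrank ℝ V = 2 * n)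
    (J : V →ₗ[ℝ] V)
    (A : V →ₗ[ℝ] V →ₗ[ℝ] V)
    (R Rbar : V → V → V → V → ℝ)
    (L E : Submodule ℝ V)
    -- almost Hermitian structure, strict nearly Kähler condition
    (hJJ : ∀ x, J (J x) = -x)
    (hJiso : ∀ x y, ⟪J x, J y⟫ = ⟪x, y⟫)
    (hNK : ∀ x, A x x = 0)
    (hstrict : ∀ x, x ≠ 0 → ∃ y, A x y ≠ 0)
    (hAskew : ∀ x y z, ⟪A x y, z⟫ = -⟪A x z, y⟫)
    (hAJ : ∀ x y, A x (J y) = -J (A x y))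
    -- the splitting TM = L ⊕ E : orthogonal, J-stable, rank L = 2
    (hcompl : IsCompl L E)
    (horth : ∀ v ∈ L, ∀ x ∈ E, ⟪v, x⟫ = 0)
    (hJL : ∀ v ∈ L, J v ∈ L) (hJE : ∀ x ∈ E, J x ∈ E)
    (hrankL : Module.finrank ℝ L = 2)
    -- the torsion vanishes on L and maps L × E to E
    (hTL : ∀ v ∈ L, ∀ w ∈ L, A v (J w) = 0)
    (hTLE : ∀ v ∈ L, ∀ x ∈ E, A v (J x) ∈ E)
    -- symmetries and the first Bianchi identity for R
    (hRsymm : ∀ x y z w, R x y z w = R z w x y)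
    (hRskew1 : ∀ x y z w, R x y z w = -R y x z w)
    (hRskew2 : ∀ x y z w, R x y z w = -R x y w z)
    (hBianchi : ∀ x y z w, R x y z w + R y z x w + R z x y w = 0)
    -- formula (2.4) relating R and R̄
    (hRbarR : ∀ x y z w, Rbar x y z w
      = R x y z w - (1/2 : ℝ) * ⟪A x y, A z w⟫
        + (1/4 : ℝ) * (⟪A x z, A y w⟫ - ⟪A x w, A y z⟫))
    -- L and E are ∇̄-parallel: R̄ pairs E with L to zero
    (hRbar0 : ∀ u w, ∀ x ∈ E, ∀ v ∈ L, Rbar u w x v = 0) :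
    (∀ x ∈ E, ∀ y ∈ E, ∀ v ∈ L,
      Rbar x y v (J v) = -2 * ⟪A v (A v x), J y⟫)
    ∧ (∀ x ∈ E, ∀ v ∈ L, Rbar x v v (J v) = 0) := by

  -- antisymmetry of A in its two arguments
  have hanti : ∀ a b, A a b = -A b a := by
    intro a b
    have h := hNK (a + b)
    simp only [map_add, LinearMap.add_apply, hNK a, hNK b, add_zero, zero_add] at h
    exact eq_neg_of_add_eq_zero_right h
  -- J is skew-adjoint
  have hJinner : ∀ a b : V, ⟪J a, b⟫ = -⟪a, J b⟫ := by
    intro a b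
    have h := hJiso a (J b)
    rw [hJJ b, inner_neg_right] at h
    linarith
  constructor
  · intro x hx y hy v hv
    have hAvv : A v v = 0 := hNK v
    have hAvJv : A v (J v) = 0 := hTL v hv v hv
    have hAJvv : A (J v) v = 0 := by rw [hanti, hAvJv, neg_zero]
    have hAxv : A x v = -A v x := hanti x v
    have hAyv : A y v = -A v y := hanti y v
    have hAxJv : A x (J v) = J (A v x) := by
      rw [hAJ x v, hAxv, map_neg, neg_neg]
    have hAyJv : A y (J v) = J (A v y) := by
      rw [hAJ y v, hAyv, map_neg, neg_neg]
    have hAJvx : A (J v) x = -J (A v x) := by rw [hanti, hAxJv]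
    have hAJvy : A (J v) y = -J (A v y) := by rw [hanti, hAyJv]
    set t : ℝ := ⟪J (A v x), A v y⟫ with ht
    have haJb : ⟪A v x, J (A v y)⟫ = -t := by
      have := hJinner (A v x) (A v y); linarith
    have hJba : ⟪J (A v y), A v x⟫ = -t := by
      rw [real_inner_comm]; exact haJb
    have h1 : ⟪A x (J v), A y v⟫ = -t := by
      rw [hAxJv, hAyv, inner_neg_right]
    have h2 : ⟪A x v, A (J v) y⟫ = -t := by
      rw [hAxv, hAJvy, inner_neg_neg]; exact haJb
    have h3 : ⟪A y (J v), A x v⟫ = t := by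
      rw [hAyJv, hAxv, inner_neg_right, hJba, neg_neg]
    have h4 : ⟪A y v, A (J v) x⟫ = t := by
      rw [hAyv, hAJvx, inner_neg_neg, real_inner_comm]
    have h5 : ⟪A x v, A y (J v)⟫ = t := by
      rw [hAxv, hAyJv, inner_neg_left, haJb, neg_neg]
    have h7 : ⟪A v (A v x), J y⟫ = -t := by
      rw [hAskew v (A v x) (J y), hAJ v y, inner_neg_left, real_inner_comm, neg_neg]
      exact haJb
    -- first curvature relation
    have e1 : Rbar x (J v) y v = 0 := hRbar0 x (J v) y hy v hv
    rw [hRbarR, h1, hAJvv, inner_zero_right, h2] at e1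
    have e2 : Rbar y (J v) x v = 0 := hRbar0 y (J v) x hx v hv
    rw [hRbarR, h3, hAJvv, inner_zero_right, h4] at e2
    -- Bianchi
    have eb := hBianchi x y v (J v)
    have es1 : R y v x (J v) = R x (J v) y v := hRsymm y v x (J v)
    have es2 : R v x y (J v) = -R y (J v) x v := by
      rw [hRskew1 v x y (J v), hRsymm x v y (J v)]
    rw [es1, es2] at eb
    rw [hRbarR, hAvJv, inner_zero_right, h5, h1, h7]
    linarith
  · intro x hx v hv
    have hAvv : A v v = 0 := hNK v
    have hAvJv : A v (J v) = 0 := hTL v hv v hv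
    have e1 : Rbar v (J v) x v = 0 := hRbar0 v (J v) x hx v hv
    rw [hRbarR, hAvJv, inner_zero_left, hAvv, inner_zero_left] at e1
    simp only [hanti (J v) v, hAvJv, neg_zero, inner_zero_right] at e1
    have es : R x v v (J v) = R v (J v) x v := hRsymm x v v (J v)
    rw [hRbarR, hAvJv, inner_zero_right, hAvv, inner_zero_right, es]
    linarith
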